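/- For a single source with k shared key bits and Y uniform on an m-element real alphabet of diameter d = max y − min y, there exists a decodable block-length-one encoding with var(Y) − MMSE_Eve ≤ d²/2^{2k}. -/

import Mathlib

open Finset


/-- Expectation of `f` under mass function `p` on a finite sample space. -/
noncomputable def pexp {Ω : Type*} [Fintype Ω] (p : Ω → ℝ) (f : Ω → ℝ) : ℝ :=
  ∑ ω, p ω * f ω

/-- Variance of `f` under mass function `p`. -/
noncomputable def pvar {Ω : Type*} [Fintype Ω] (p : Ω → ℝ) (f : Ω → ℝ) : ℝ :=
  pexp p (fun ω => (f ω - pexp p f) ^ 2)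

/-- Minimum mean-squared error of estimating `Y` from the observation `τ`:
the infimum over all estimators `h` of `E[(Y - h(τ))²]`. -/
noncomputable def pmmse {Ω T : Type*} [Fintype Ω] (p : Ω → ℝ) (Y : Ω → ℝ) (τ : Ω → T) : ℝ :=
  sInf {e : ℝ | ∃ h : T → ℝ, e = pexp p (fun ω => (Y ω - h (τ ω)) ^ 2)}

/-- Conditional expectation `E[Y | τ = t]` (with the junk value `0` on null events). -/
noncomputable def pcond {Ω T : Type*} [Fintype Ω] [DecidableEq T]
    (p : Ω → ℝ) (Y : Ω → ℝ) (τ : Ω → T) (t : T) : ℝ :=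
  (∑ ω ∈ Finset.univ.filter (fun ω => τ ω = t), p ω * Y ω) /
    (∑ ω ∈ Finset.univ.filter (fun ω => τ ω = t), p ω)


noncomputable def st10tau {m : ℕ} (z : Fin m → ℝ) : Equiv.Perm (Fin m) :=
  (Tuple.sort z) * Fin.revPerm * (Tuple.sort z)⁻¹

noncomputable def st10mid {m : ℕ} (z : Fin m → ℝ) : Fin m → ℝ :=
  fun p => (z p + z (st10tau z p)) / 2

noncomputable def st10enc {m : ℕ} : (k : ℕ) → (Fin m → ℝ) → Fin m → ℕ → Fin m
  | 0, _, p, _ => p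
  | (k+1), z, p, i =>
      st10enc k (st10mid z) (if 2^k ≤ i then st10tau z p else p) (i % 2^k)

lemma st10tau_tau {m : ℕ} (z : Fin m → ℝ) (p : Fin m) :
    st10tau z (st10tau z p) = p := by
  simp [st10tau, Equiv.Perm.mul_apply]

lemma st10enc_inj {m : ℕ} : ∀ (k : ℕ) (z : Fin m → ℝ) (i : ℕ),
    Function.Injective (fun p => st10enc k z p i)
  | 0, z, i => fun a b h => h
  | (k+1), z, i => by
    intro a b h
    simp only [st10enc] at h
    have h2 := st10enc_inj k (st10mid z) (i % 2^k) h
    split_ifs at h2 with hc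
    · exact (st10tau z).injective h2
    · exact h2

lemma st10sum_range_add (f : ℕ → ℝ) (a b : ℕ) :
    ∑ i ∈ range (a+b), f i = ∑ i ∈ range a, f i + ∑ i ∈ range b, f (a + i) := by
  induction b with
  | zero => simp
  | succ n ih =>
      rw [Nat.add_succ, Finset.sum_range_succ, ih, Finset.sum_range_succ, add_assoc]

lemma st10split {m : ℕ} (k : ℕ) (z : Fin m → ℝ) (F : Fin m → ℕ → ℝ) (p : Fin m) :
    ∑ i ∈ range (2^(k+1)), F (st10enc (k+1) z p i) i
      = ∑ i ∈ range (2^k), F (st10enc k (st10mid z) p i) i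
        + ∑ i ∈ range (2^k), F (st10enc k (st10mid z) (st10tau z p) i) (2^k + i) := by
  have h2 : 2^(k+1) = 2^k + 2^k := by rw [pow_succ, mul_two]
  rw [h2, st10sum_range_add]
  congr 1
  · refine Finset.sum_congr rfl fun i hi => ?_
    have hi' : i < 2^k := Finset.mem_range.mp hi
    simp [st10enc, Nat.not_le.mpr hi', Nat.mod_eq_of_lt hi']
  · refine Finset.sum_congr rfl fun i hi => ?_
    have hi' : i < 2^k := Finset.mem_range.mp hi
    simp [st10enc, Nat.le_add_right, Nat.add_mod_left, Nat.mod_eq_of_lt hi']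

lemma st10card {m : ℕ} : ∀ (k : ℕ) (z : Fin m → ℝ) (t : Fin m),
    (∑ p : Fin m, ∑ i ∈ range (2^k), (if st10enc k z p i = t then (1:ℝ) else 0))
      = 2^k
  | 0, z, t => by
    simp only [pow_zero, Finset.range_one, Finset.sum_singleton, st10enc]
    show (∑ p : Fin m, if p = t then (1:ℝ) else 0) = 1; simp
  | (k+1), z, t => by
    have key : ∀ p : Fin m,
        ∑ i ∈ range (2^(k+1)), (if st10enc (k+1) z p i = t then (1:ℝ) else 0)
          = (∑ i ∈ range (2^k), (if st10enc k (st10mid z) p i = t then (1:ℝ) else 0))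
            + ∑ i ∈ range (2^k),
                (if st10enc k (st10mid z) (st10tau z p) i = t then (1:ℝ) else 0) := by
      intro p
      exact st10split k z (fun s _ => if s = t then (1:ℝ) else 0) p
    calc (∑ p : Fin m, ∑ i ∈ range (2^(k+1)),
            (if st10enc (k+1) z p i = t then (1:ℝ) else 0))
        = (∑ p : Fin m, ∑ i ∈ range (2^k),
            (if st10enc k (st10mid z) p i = t then (1:ℝ) else 0))
          + ∑ p : Fin m, ∑ i ∈ range (2^k),
              (if st10enc k (st10mid z) (st10tau z p) i = t then (1:ℝ) else 0) := by
          rw [← Finset.sum_add_distrib]; exact Finset.sum_congr rfl fun p _ => key p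
      _ = 2^k + 2^k := by
          rw [st10card k (st10mid z) t]
          congr 1
          rw [Equiv.sum_comp (st10tau z)
            (fun q => ∑ i ∈ range (2^k),
              (if st10enc k (st10mid z) q i = t then (1:ℝ) else 0))]
          exact st10card k (st10mid z) t
      _ = 2^(k+1) := by rw [pow_succ]; ring

lemma st10sum {m : ℕ} : ∀ (k : ℕ) (z : Fin m → ℝ) (t : Fin m),
    (∑ p : Fin m, ∑ i ∈ range (2^k), (if st10enc k z p i = t then z p else 0))
      = 2^k * (st10mid^[k] z) t
  | 0, z, t => by
    simp only [pow_zero, Finset.range_one, Finset.sum_singleton, st10enc]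
    simp [Finset.sum_ite_eq']
    exact (Finset.sum_ite_eq' Finset.univ t z).trans (if_pos (Finset.mem_univ t))
  | (k+1), z, t => by
    have key : ∀ p : Fin m,
        ∑ i ∈ range (2^(k+1)), (if st10enc (k+1) z p i = t then z p else 0)
          = (∑ i ∈ range (2^k), (if st10enc k (st10mid z) p i = t then z p else 0))
            + ∑ i ∈ range (2^k),
                (if st10enc k (st10mid z) (st10tau z p) i = t then z p else 0) := by
      intro p
      exact st10split k z (fun s _ => if s = t then z p else 0) p
    have swap : (∑ p : Fin m, ∑ i ∈ range (2^k),
          (if st10enc k (st10mid z) (st10tau z p) i = t then z p else 0))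
        = ∑ q : Fin m, ∑ i ∈ range (2^k),
            (if st10enc k (st10mid z) q i = t then z (st10tau z q) else 0) := by
      rw [← Equiv.sum_comp (st10tau z)
        (fun q => ∑ i ∈ range (2^k),
          (if st10enc k (st10mid z) q i = t then z (st10tau z q) else 0))]
      exact Finset.sum_congr rfl fun p _ => by rw [st10tau_tau]
    calc (∑ p : Fin m, ∑ i ∈ range (2^(k+1)),
            (if st10enc (k+1) z p i = t then z p else 0))
        = (∑ p : Fin m, ∑ i ∈ range (2^k),
            (if st10enc k (st10mid z) p i = t then z p else 0))
          + ∑ p : Fin m, ∑ i ∈ range (2^k),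
              (if st10enc k (st10mid z) (st10tau z p) i = t then z p else 0) := by
          rw [← Finset.sum_add_distrib]; exact Finset.sum_congr rfl fun p _ => key p
      _ = ∑ q : Fin m, ∑ i ∈ range (2^k),
            (if st10enc k (st10mid z) q i = t then 2 * st10mid z q else 0) := by
          rw [swap, ← Finset.sum_add_distrib]
          refine Finset.sum_congr rfl fun q _ => ?_
          rw [← Finset.sum_add_distrib]
          refine Finset.sum_congr rfl fun i _ => ?_
          split_ifs
          · simp [st10mid]; ring
          · ring
      _ = 2 * ∑ q : Fin m, ∑ i ∈ range (2^k),
            (if st10enc k (st10mid z) q i = t then st10mid z q else 0) := by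
          rw [Finset.mul_sum]
          refine Finset.sum_congr rfl fun q _ => ?_
          rw [Finset.mul_sum]
          refine Finset.sum_congr rfl fun i _ => ?_
          split_ifs <;> ring
      _ = 2^(k+1) * (st10mid^[k+1] z) t := by
          rw [st10sum k (st10mid z) t, Function.iterate_succ_apply, pow_succ]
          ring

lemma st10mid_sum {m : ℕ} (z : Fin m → ℝ) : ∑ p, st10mid z p = ∑ p, z p := by
  have h := Equiv.sum_comp (st10tau z) z
  simp only [st10mid]
  rw [← Finset.sum_div, Finset.sum_add_distrib, h]
  ring

lemma st10diam {m : ℕ} (he : (Finset.univ : Finset (Fin m)).Nonempty) (z : Fin m → ℝ) :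
    Finset.univ.sup' he (st10mid z) - Finset.univ.inf' he (st10mid z)
      ≤ (Finset.univ.sup' he z - Finset.univ.inf' he z) / 2 := by
  obtain ⟨p, -, hp⟩ := Finset.exists_mem_eq_sup' he (st10mid z)
  obtain ⟨q, -, hq⟩ := Finset.exists_mem_eq_inf' he (st10mid z)
  rw [hp, hq]
  have hz : ∀ a b : Fin m, z a - z b ≤ Finset.univ.sup' he z - Finset.univ.inf' he z :=
    fun a b => sub_le_sub (Finset.le_sup' _ (Finset.mem_univ a))
      (Finset.inf'_le _ (Finset.mem_univ b))
  set σ := Tuple.sort z with hσ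
  have hmono : Monotone (z ∘ σ) := Tuple.monotone_sort z
  have hform : ∀ r : Fin m, st10mid z r = ((z ∘ σ) (σ⁻¹ r) + (z ∘ σ) (Fin.rev (σ⁻¹ r))) / 2 := by
    intro r
    simp [st10mid, st10tau, Equiv.Perm.mul_apply, hσ]
  rw [hform p, hform q]
  set u := σ⁻¹ p
  set v := σ⁻¹ q
  rcases le_total u v with h | h
  · have h1 : (z ∘ σ) u ≤ (z ∘ σ) v := hmono h
    have h2 : (z ∘ σ) (Fin.rev u) - (z ∘ σ) (Fin.rev v)
        ≤ Finset.univ.sup' he z - Finset.univ.inf' he z := hz _ _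
    simp only [Function.comp] at h1 h2 ⊢
    linarith
  · have h1 : (z ∘ σ) (Fin.rev u) ≤ (z ∘ σ) (Fin.rev v) := hmono (Fin.rev_le_rev.mpr h)
    have h2 : (z ∘ σ) u - (z ∘ σ) v
        ≤ Finset.univ.sup' he z - Finset.univ.inf' he z := hz _ _
    simp only [Function.comp] at h1 h2 ⊢
    linarith

lemma st10diam_iter {m : ℕ} (he : (Finset.univ : Finset (Fin m)).Nonempty) (y : Fin m → ℝ) :
    ∀ j : ℕ, Finset.univ.sup' he (st10mid^[j] y) - Finset.univ.inf' he (st10mid^[j] y)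
      ≤ (Finset.univ.sup' he y - Finset.univ.inf' he y) / 2^j := by
  intro j
  induction j with
  | zero => simp
  | succ n ih =>
      rw [Function.iterate_succ_apply']
      calc _ ≤ (Finset.univ.sup' he (st10mid^[n] y)
            - Finset.univ.inf' he (st10mid^[n] y)) / 2 := st10diam he _
        _ ≤ ((Finset.univ.sup' he y - Finset.univ.inf' he y) / 2^n) / 2 := by linarith
        _ = (Finset.univ.sup' he y - Finset.univ.inf' he y) / 2^(n+1) := by
            rw [div_div, pow_succ]

lemma st10mid_iter_sum {m : ℕ} (y : Fin m → ℝ) (j : ℕ) :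
    ∑ p, (st10mid^[j] y) p = ∑ p, y p := by
  induction j with
  | zero => simp
  | succ n ih => rw [Function.iterate_succ_apply', st10mid_sum, ih]

lemma st10main (m k : ℕ) (hm : 0 < m) (y : Fin m → ℝ) :
    pvar (fun _ : Fin m × Fin (2 ^ k) => 1 / (m * 2 ^ k)) (fun ω => y ω.1) -
        pmmse (fun _ : Fin m × Fin (2 ^ k) => 1 / (m * 2 ^ k)) (fun ω => y ω.1)
          (fun ω => st10enc k y ω.1 ω.2.val) ≤
      ((Finset.univ.sup' ⟨⟨0, hm⟩, Finset.mem_univ _⟩ y) -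
        (Finset.univ.inf' ⟨⟨0, hm⟩, Finset.mem_univ _⟩ y)) ^ 2 / 2 ^ (2 * k) := by
  have he : (Finset.univ : Finset (Fin m)).Nonempty := ⟨⟨0, hm⟩, Finset.mem_univ _⟩
  have hm' : (0:ℝ) < m := by exact_mod_cast hm
  have hCpos : (0:ℝ) < (m:ℝ) * 2 ^ k := by positivity
  set d0 : ℝ := (Finset.univ.sup' he y) - (Finset.univ.inf' he y) with hd0
  set w : Fin m → ℝ := st10mid^[k] y with hwdef
  set X : Fin m × Fin (2 ^ k) → Fin m := fun ω => st10enc k y ω.1 ω.2.val with hXdef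
  set S : (Fin m → ℝ) → ℝ :=
    fun h => ∑ ω : Fin m × Fin (2 ^ k), (y ω.1 - h (X ω)) ^ 2 with hSdef
  -- pexp of anything under the uniform mass
  have hpexp : ∀ F : Fin m × Fin (2 ^ k) → ℝ,
      pexp (fun _ : Fin m × Fin (2 ^ k) => 1 / (m * 2 ^ k)) F
        = (∑ ω, F ω) / ((m:ℝ) * 2 ^ k) := by
    intro F
    rw [pexp, Finset.sum_div]
    exact Finset.sum_congr rfl fun ω _ => by ring
  -- fiber counting
  have hA : ∀ t, (∑ ω : Fin m × Fin (2 ^ k), (if X ω = t then (1:ℝ) else 0))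
      = 2 ^ k := by
    intro t
    rw [Fintype.sum_prod_type]
    calc (∑ p : Fin m, ∑ i : Fin (2 ^ k), (if X (p, i) = t then (1:ℝ) else 0))
        = ∑ p : Fin m, ∑ i ∈ range (2 ^ k),
            (if st10enc k y p i = t then (1:ℝ) else 0) := by
          refine Finset.sum_congr rfl fun p _ => ?_
          exact Fin.sum_univ_eq_sum_range
            (fun i => if st10enc k y p i = t then (1:ℝ) else 0) (2 ^ k)
      _ = 2 ^ k := st10card k y t
  have hB : ∀ t, (∑ ω : Fin m × Fin (2 ^ k), (if X ω = t then y ω.1 else 0))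
      = 2 ^ k * w t := by
    intro t
    rw [Fintype.sum_prod_type]
    calc (∑ p : Fin m, ∑ i : Fin (2 ^ k), (if X (p, i) = t then y p else 0))
        = ∑ p : Fin m, ∑ i ∈ range (2 ^ k),
            (if st10enc k y p i = t then y p else 0) := by
          refine Finset.sum_congr rfl fun p _ => ?_
          exact Fin.sum_univ_eq_sum_range
            (fun i => if st10enc k y p i = t then y p else 0) (2 ^ k)
      _ = 2 ^ k * w t := st10sum k y t
  -- fiberwise decomposition
  have hfiber : ∀ h : Fin m → ℝ,
      S h = ∑ t, ∑ ω : Fin m × Fin (2 ^ k),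
        (if X ω = t then (y ω.1 - h t) ^ 2 else 0) := by
    intro h
    rw [Finset.sum_comm, hSdef]
    refine Finset.sum_congr rfl fun ω _ => ?_
    simp [Finset.sum_ite_eq]
  have hexp : ∀ (h : Fin m → ℝ) (t : Fin m),
      (∑ ω : Fin m × Fin (2 ^ k), (if X ω = t then (y ω.1 - h t) ^ 2 else 0))
        = (∑ ω : Fin m × Fin (2 ^ k), (if X ω = t then (y ω.1) ^ 2 else 0))
          - 2 * h t * (∑ ω : Fin m × Fin (2 ^ k), (if X ω = t then y ω.1 else 0))
          + h t ^ 2 * (∑ ω : Fin m × Fin (2 ^ k), (if X ω = t then (1:ℝ) else 0)) := by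
    intro h t
    rw [Finset.mul_sum, Finset.mul_sum, ← Finset.sum_sub_distrib, ← Finset.sum_add_distrib]
    refine Finset.sum_congr rfl fun ω _ => ?_
    split_ifs <;> ring
  -- the key identity
  have hSid : ∀ h : Fin m → ℝ, S h = S w + 2 ^ k * ∑ t, (h t - w t) ^ 2 := by
    intro h
    rw [hfiber h, hfiber w, Finset.mul_sum, ← Finset.sum_add_distrib]
    refine Finset.sum_congr rfl fun t _ => ?_
    rw [hexp h t, hexp w t, hA t, hB t]
    ring
  -- lower bound on the mmse
  have hmmse : S w / ((m:ℝ) * 2 ^ k)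
      ≤ pmmse (fun _ : Fin m × Fin (2 ^ k) => 1 / (m * 2 ^ k)) (fun ω => y ω.1) X := by
    apply le_csInf
    · exact ⟨_, w, rfl⟩
    · rintro e ⟨h, rfl⟩
      rw [hpexp]
      have h1 : S w ≤ S h := by
        rw [hSid h]
        have h2 : (0:ℝ) ≤ ∑ t, (h t - w t) ^ 2 :=
          Finset.sum_nonneg fun t _ => sq_nonneg _
        nlinarith [pow_pos (zero_lt_two (α := ℝ)) k]
      exact div_le_div_of_nonneg_right h1 hCpos.le
  -- the variance
  set μ : ℝ := pexp (fun _ : Fin m × Fin (2 ^ k) => 1 / (m * 2 ^ k)) (fun ω => y ω.1) with hμdef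
  have hvar : pvar (fun _ : Fin m × Fin (2 ^ k) => 1 / (m * 2 ^ k)) (fun ω => y ω.1)
      = S (fun _ => μ) / ((m:ℝ) * 2 ^ k) := by
    rw [pvar, hpexp]
  -- μ is the average of w
  have hμval : μ = (∑ p, w p) / m := by
    have h1 : (∑ ω : Fin m × Fin (2 ^ k), y ω.1) = 2 ^ k * ∑ p, y p := by
      rw [Fintype.sum_prod_type, Finset.mul_sum]
      refine Finset.sum_congr rfl fun p _ => ?_
      simp [mul_comm]
    have h2 : ∑ p, w p = ∑ p, y p := st10mid_iter_sum y k
    rw [hμdef, hpexp, h1, h2]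
    field_simp
  have hub : ∑ p, w p ≤ m * Finset.univ.sup' he w := by
    calc ∑ p, w p ≤ ∑ _p : Fin m, Finset.univ.sup' he w :=
          Finset.sum_le_sum fun p _ => Finset.le_sup' w (Finset.mem_univ p)
      _ = m * Finset.univ.sup' he w := by
          rw [Finset.sum_const, Finset.card_univ]; simp [mul_comm]
  have hlb : (m:ℝ) * Finset.univ.inf' he w ≤ ∑ p, w p := by
    calc (m:ℝ) * Finset.univ.inf' he w = ∑ _p : Fin m, Finset.univ.inf' he w := by
          rw [Finset.sum_const, Finset.card_univ]; simp [mul_comm]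
      _ ≤ ∑ p, w p := Finset.sum_le_sum fun p _ => Finset.inf'_le w (Finset.mem_univ p)
  have hμub : μ ≤ Finset.univ.sup' he w := by
    rw [hμval, div_le_iff₀ hm']
    linarith
  have hμlb : Finset.univ.inf' he w ≤ μ := by
    rw [hμval, le_div_iff₀ hm']
    linarith
  -- pointwise bound on (μ - w t)²
  have hdiam := st10diam_iter he y k
  have hpt : ∀ t, (μ - w t) ^ 2 ≤ (d0 / 2 ^ k) ^ 2 := by
    intro t
    have h1 : Finset.univ.inf' he w ≤ w t := Finset.inf'_le w (Finset.mem_univ t)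
    have h2 : w t ≤ Finset.univ.sup' he w := Finset.le_sup' w (Finset.mem_univ t)
    have h3 : |μ - w t| ≤ Finset.univ.sup' he w - Finset.univ.inf' he w :=
      abs_le.mpr ⟨by linarith, by linarith⟩
    calc (μ - w t) ^ 2 = |μ - w t| ^ 2 := (sq_abs _).symm
      _ ≤ (d0 / 2 ^ k) ^ 2 :=
          pow_le_pow_left₀ (abs_nonneg _) (le_trans h3 hdiam) 2
  have hsum : (∑ t, (μ - w t) ^ 2) ≤ m * (d0 / 2 ^ k) ^ 2 := by
    calc (∑ t, (μ - w t) ^ 2) ≤ ∑ _t : Fin m, (d0 / 2 ^ k) ^ 2 :=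
          Finset.sum_le_sum fun t _ => hpt t
      _ = m * (d0 / 2 ^ k) ^ 2 := by
          rw [Finset.sum_const, Finset.card_univ]; simp [mul_comm]
  -- assemble
  have htwo : (2:ℝ) ^ (2 * k) = ((2:ℝ) ^ k) ^ 2 := by
    rw [two_mul, pow_add]; ring
  calc pvar (fun _ : Fin m × Fin (2 ^ k) => 1 / (m * 2 ^ k)) (fun ω => y ω.1)
        - pmmse (fun _ : Fin m × Fin (2 ^ k) => 1 / (m * 2 ^ k)) (fun ω => y ω.1) X
      ≤ S (fun _ => μ) / ((m:ℝ) * 2 ^ k) - S w / ((m:ℝ) * 2 ^ k) := by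
        rw [hvar]
        exact sub_le_sub_left hmmse _
    _ = (2 ^ k * ∑ t, (μ - w t) ^ 2) / ((m:ℝ) * 2 ^ k) := by
        rw [hSid (fun _ => μ)]
        ring
    _ ≤ (2 ^ k * (m * (d0 / 2 ^ k) ^ 2)) / ((m:ℝ) * 2 ^ k) := by
        exact div_le_div_of_nonneg_right
          (mul_le_mul_of_nonneg_left hsum (by positivity)) hCpos.le
    _ = d0 ^ 2 / 2 ^ (2 * k) := by
        rw [htwo]
        field_simp

/-- For `Y` uniform on an `m`-element real alphabet of diameter `d` and `k` bits of shared
key, there is a decodable block-length-one encoding with distortion gap at most `d²/2^{2k}`. -/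
theorem stmt10 (m k : ℕ) (hm : 0 < m) (y : Fin m → ℝ) :
    let d : ℝ := (Finset.univ.sup' ⟨⟨0, hm⟩, Finset.mem_univ _⟩ y) -
      (Finset.univ.inf' ⟨⟨0, hm⟩, Finset.mem_univ _⟩ y)
    ∃ e : Fin m → Fin (2 ^ k) → Fin m,
      (∀ i : Fin (2 ^ k), Function.Injective (fun a => e a i)) ∧
      pvar (fun _ : Fin m × Fin (2 ^ k) => 1 / (m * 2 ^ k)) (fun ω => y ω.1) -
          pmmse (fun _ : Fin m × Fin (2 ^ k) => 1 / (m * 2 ^ k)) (fun ω => y ω.1)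
            (fun ω => e ω.1 ω.2) ≤
        d ^ 2 / 2 ^ (2 * k) := by
  intro d
  exact ⟨fun a i => st10enc k y a i.val,
    fun i a b h => st10enc_inj k y i.val h,
    st10main m k hm y⟩
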